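/- An H-module algebra R is H-semiprime if and only if for every non-zero a ∈ R there exists an H-m-sequence {aₙ} in R with a₁ = a such that aₙ ≠ 0 for all n. -/

import Mathlib

open scoped TensorProduct

class HModAlg (k H R : Type*) [CommRing k] [Ring H] [Algebra k H]
    [Coalgebra k H] [NonUnitalRing R] [Module k R]
    [SMulCommClass k R R] [IsScalarTower k R R] where
  hsmul : H →ₗ[k] R →ₗ[k] R
  one_hsmul : ∀ r : R, hsmul 1 r = r
  mul_hsmul : ∀ (h h' : H) (r : R), hsmul (h * h') r = hsmul h (hsmul h' r)
  hsmul_mul : ∀ (h : H) (a b : R),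
    hsmul h (a * b) =
      LinearMap.mul' k R
        (TensorProduct.map (hsmul.flip a) (hsmul.flip b) (Coalgebra.comul h))

/-- product f 0 * f 1 * ⋯ * f n -/
def prodSeq {R : Type*} [Mul R] (f : ℕ → R) : ℕ → R
  | 0 => f 0
  | n + 1 => prodSeq f n * f (n + 1)

/-- `I` is a nilpotent subset: some power of it vanishes. -/
def IsNilpotentSet {R : Type*} [Mul R] [Zero R] (I : Set R) : Prop :=
  ∃ n : ℕ, ∀ f : ℕ → R, (∀ i, f i ∈ I) → prodSeq f n = 0

/-- `I` is nilpotent modulo `J`. -/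
def IsNilpotentSetMod {R : Type*} [Mul R] (I J : Set R) : Prop :=
  ∃ n : ℕ, ∀ f : ℕ → R, (∀ i, f i ∈ I) → prodSeq f n ∈ J

section Defs

variable (k H : Type*) {R : Type*} [CommRing k] [Ring H] [Algebra k H]
  [Coalgebra k H] [NonUnitalRing R] [Module k R]
  [SMulCommClass k R R] [IsScalarTower k R R] [HModAlg k H R]

/-- The action of `h : H` on `r : R`. -/
def hact (h : H) (r : R) : R := HModAlg.hsmul (k := k) h r

/-- `I` is an `H`-ideal of the `H`-module (sub)algebra `B ⊆ R`. -/
structure IsHIdealIn (B I : Set R) : Prop where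
  subset : I ⊆ B
  zero_mem : (0 : R) ∈ I
  add_mem : ∀ {x y : R}, x ∈ I → y ∈ I → x + y ∈ I
  neg_mem : ∀ {x : R}, x ∈ I → -x ∈ I
  mul_mem_left : ∀ {x : R}, x ∈ B → ∀ {y : R}, y ∈ I → x * y ∈ I
  mul_mem_right : ∀ {x : R}, x ∈ I → ∀ {y : R}, y ∈ B → x * y ∈ I
  hsmul_mem : ∀ (h : H) {x : R}, x ∈ I → hact k H h x ∈ I

/-- `I` is an `H`-ideal of `R`. -/
def IsHIdeal (I : Set R) : Prop := IsHIdealIn k H Set.univ I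

/-- `R` is `H`-semiprime. -/
def IsHSemiprime : Prop :=
  ∀ I : Set R, IsHIdeal k H I → IsNilpotentSet I → I = {0}

/-- The subalgebra `B` of `R` is `H`-semiprime. -/
def IsHSemiprimeIn (B : Set R) : Prop :=
  ∀ I : Set R, IsHIdealIn k H B I → IsNilpotentSet I → I = {0}

/-- `R` is `H`-prime. -/
def IsHPrime : Prop :=
  ∀ I J : Set R, IsHIdeal k H I → IsHIdeal k H J →
    (∀ a ∈ I, ∀ b ∈ J, a * b = 0) → I = {0} ∨ J = {0}

/-- The `H`-ideal of `R` generated by `E`. -/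
def genHIdeal (E : Set R) : Set R := ⋂₀ {I : Set R | IsHIdeal k H I ∧ E ⊆ I}

end Defs



/-! ### Auxiliary lemmas -/

def omul {R : Type*} [Mul R] (o : Option R) (r : R) : R := o.elim r (· * r)
def mulo {R : Type*} [Mul R] (r : R) (o : Option R) : R := o.elim r (r * ·)

section AuxOpt

variable {R : Type*} [NonUnitalRing R]

lemma triple_eq (u₁ u₂ u₃ : R) (x₁ y₁ x₂ y₂ x₃ y₃ : Option R) :
    mulo (omul x₁ u₁) y₁ * mulo (omul x₂ u₂) y₂ * mulo (omul x₃ u₃) y₃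
      = mulo (omul x₁ (u₁ * omul y₁ (omul x₂ (mulo (mulo u₂ y₂) x₃)) * u₃)) y₃ := by
  cases x₁ <;> cases y₁ <;> cases x₂ <;> cases y₂ <;> cases x₃ <;> cases y₃ <;>
    simp [omul, mulo, mul_assoc]

lemma lmul_form (r u : R) (x y : Option R) :
    r * mulo (omul x u) y = mulo (omul (some (x.elim r (r * ·))) u) y := by
  cases x <;> cases y <;> simp [omul, mulo, mul_assoc]

lemma rmul_form (r u : R) (x y : Option R) :
    mulo (omul x u) y * r = mulo (omul x u) (some (y.elim r (· * r))) := by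
  cases x <;> cases y <;> simp [omul, mulo, mul_assoc]

lemma mulo_omul_zero (x y : Option R) : mulo (omul x (0:R)) y = 0 := by
  cases x <;> cases y <;> simp [omul, mulo]

lemma prodSeq_congr {f g : ℕ → R} : ∀ {n}, (∀ i ≤ n, f i = g i) → prodSeq f n = prodSeq g n
  | 0, h => h 0 le_rfl
  | n + 1, h => by
      show prodSeq f n * f (n+1) = prodSeq g n * g (n+1)
      rw [prodSeq_congr (fun i hi => h i (hi.trans (Nat.le_succ n))), h (n+1) le_rfl]

lemma prodSeq_append (f : ℕ → R) (m l : ℕ) :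
    prodSeq f (m + 1 + l) = prodSeq f m * prodSeq (fun i => f (m + 1 + i)) l := by
  induction l with
  | zero => show prodSeq f (m + 1) = prodSeq f m * f (m + 1 + 0); rw [Nat.add_zero]; rfl
  | succ l ih =>
      show prodSeq f (m + 1 + l) * f (m + 1 + l + 1)
        = prodSeq f m * (prodSeq (fun i => f (m+1+i)) l * f (m + 1 + (l+1)))
      rw [ih, mul_assoc]
      rfl

end AuxOpt

section AuxH

variable {k H R : Type*} [CommRing k] [Ring H] [Algebra k H]
  [Coalgebra k H] [NonUnitalRing R] [Module k R]
  [SMulCommClass k R R] [IsScalarTower k R R] [HModAlg k H R]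

lemma hact_one' (r : R) : hact k H (1 : H) r = r := HModAlg.one_hsmul r

lemma hact_hact' (h h' : H) (r : R) :
    hact k H h (hact k H h' r) = hact k H (h * h') r :=
  (HModAlg.mul_hsmul h h' r).symm

lemma hact_zero' (h : H) : hact k H h (0 : R) = 0 := by
  unfold hact; exact map_zero _

lemma hact_add' (h : H) (x y : R) :
    hact k H h (x + y) = hact k H h x + hact k H h y := by
  unfold hact; exact map_add _ _ _

lemma hact_neg' (h : H) (x : R) : hact k H h (-x) = - hact k H h x := by
  unfold hact; exact map_neg _ _

lemma hact_mul_mem (I : AddSubgroup R) (h : H) (u v : R)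
    (hi : ∀ h1 h2 : H, hact k H h1 u * hact k H h2 v ∈ I) :
    hact k H h (u * v) ∈ I := by
  have e := HModAlg.hsmul_mul (k := k) (R := R) h u v
  unfold hact
  rw [e]
  induction Coalgebra.comul (R := k) h using TensorProduct.induction_on with
  | zero => simpa using I.zero_mem
  | tmul a b =>
      simp only [TensorProduct.map_tmul, LinearMap.mul'_apply, LinearMap.flip_apply]
      exact hi a b
  | add x y hx hy =>
      rw [map_add, map_add]
      exact I.add_mem hx hy

end AuxH


/-! ### More auxiliary machinery -/

section AuxMain

variable {k H R : Type*} [CommRing k] [Ring H] [Algebra k H]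
  [Coalgebra k H] [NonUnitalRing R] [Module k R]
  [SMulCommClass k R R] [IsScalarTower k R R] [HModAlg k H R]

variable (k H) in
/-- generators of the `H`-ideal generated by `c` -/
def mseqGen (c : R) : Set R :=
  {g | ∃ (h : H) (x y : Option R), g = mulo (omul x (hact k H h c)) y}

variable (k H) in
def mseqIdeal (c : R) : AddSubgroup R := AddSubgroup.closure (mseqGen k H c)

lemma mem_mseqGen_self (c : R) : c ∈ mseqGen k H c :=
  ⟨1, none, none, by simp [mulo, omul, hact_one']⟩

lemma mseqIdeal_mul_left (c : R) (r : R) :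
    ∀ p ∈ mseqIdeal k H c, r * p ∈ mseqIdeal k H c := by
  intro p hp
  induction hp using AddSubgroup.closure_induction with
  | mem g hg =>
      obtain ⟨h0, x, y, rfl⟩ := hg
      exact AddSubgroup.subset_closure ⟨h0, some (x.elim r (r * ·)), y, lmul_form r _ x y⟩
  | zero => rw [mul_zero]; exact zero_mem _
  | add p q hp hq hp' hq' => rw [mul_add]; exact add_mem hp' hq'
  | neg p hp hp' => rw [mul_neg]; exact neg_mem hp'

lemma mseqIdeal_mul_right (c : R) (r : R) :
    ∀ p ∈ mseqIdeal k H c, p * r ∈ mseqIdeal k H c := by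
  intro p hp
  induction hp using AddSubgroup.closure_induction with
  | mem g hg =>
      obtain ⟨h0, x, y, rfl⟩ := hg
      exact AddSubgroup.subset_closure ⟨h0, x, some (y.elim r (· * r)), rmul_form r _ x y⟩
  | zero => rw [zero_mul]; exact zero_mem _
  | add p q hp hq hp' hq' => rw [add_mul]; exact add_mem hp' hq'
  | neg p hp hp' => rw [neg_mul]; exact neg_mem hp'

lemma mseqIdeal_triple {c : R}
    (hcon : ∀ (h h' : H) (b : R), hact k H h c * b * hact k H h' c = 0) :
    ∀ p ∈ mseqIdeal k H c, ∀ q ∈ mseqIdeal k H c, ∀ w ∈ mseqIdeal k H c,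
      p * q * w = 0 := by
  have k1 : ∀ g₁ ∈ mseqGen k H c, ∀ g₂ ∈ mseqGen k H c, ∀ w ∈ mseqIdeal k H c,
      g₁ * g₂ * w = 0 := by
    rintro g₁ ⟨h₁, x₁, y₁, rfl⟩ g₂ ⟨h₂, x₂, y₂, rfl⟩ w hw
    induction hw using AddSubgroup.closure_induction with
    | mem g hg =>
        obtain ⟨h₃, x₃, y₃, rfl⟩ := hg
        rw [triple_eq, hcon, mulo_omul_zero]
    | zero => rw [mul_zero]
    | add p q hp hq hp' hq' => rw [mul_add, hp', hq', add_zero]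
    | neg p hp hp' => rw [mul_neg, hp', neg_zero]
  have k2 : ∀ g₁ ∈ mseqGen k H c, ∀ q ∈ mseqIdeal k H c, ∀ w ∈ mseqIdeal k H c,
      g₁ * q * w = 0 := by
    intro g₁ hg₁ q hq
    induction hq using AddSubgroup.closure_induction with
    | mem g hg => exact k1 g₁ hg₁ g hg
    | zero => intro w hw; rw [mul_zero, zero_mul]
    | add p q hp hq hp' hq' =>
        intro w hw; rw [mul_add, add_mul, hp' w hw, hq' w hw, add_zero]
    | neg p hp hp' => intro w hw; rw [mul_neg, neg_mul, hp' w hw, neg_zero]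
  intro p hp
  induction hp using AddSubgroup.closure_induction with
  | mem g hg => exact k2 g hg
  | zero => intro q _ w _; rw [zero_mul, zero_mul]
  | add p q hp hq hp2 hq2 =>
      intro q' hq3 w hw
      rw [add_mul, add_mul, hp2 q' hq3 w hw, hq2 q' hq3 w hw, add_zero]
  | neg p hp hp2 => intro q hq w hw; rw [neg_mul, neg_mul, hp2 q hq w hw, neg_zero]

lemma mseqIdeal_hact (c : R) :
    ∀ p ∈ mseqIdeal k H c, ∀ h0 : H, hact k H h0 p ∈ mseqIdeal k H c := by
  have hGact : ∀ g ∈ mseqGen k H c, ∀ h0 : H, hact k H h0 g ∈ mseqIdeal k H c := by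
    rintro g ⟨h1, x, y, rfl⟩ h0
    cases x with
    | none =>
        cases y with
        | none =>
            show hact k H h0 (hact k H h1 c) ∈ mseqIdeal k H c
            rw [hact_hact']
            exact AddSubgroup.subset_closure ⟨h0 * h1, none, none, rfl⟩
        | some b =>
            show hact k H h0 (hact k H h1 c * b) ∈ mseqIdeal k H c
            refine hact_mul_mem _ h0 _ b (fun ha hb => ?_)
            rw [hact_hact']
            exact AddSubgroup.subset_closure ⟨ha * h1, none, some (hact k H hb b), rfl⟩
    | some a =>
        cases y with
        | none =>
            show hact k H h0 (a * hact k H h1 c) ∈ mseqIdeal k H c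
            refine hact_mul_mem _ h0 a _ (fun ha hb => ?_)
            rw [hact_hact']
            exact AddSubgroup.subset_closure ⟨hb * h1, some (hact k H ha a), none, rfl⟩
        | some b =>
            show hact k H h0 (a * hact k H h1 c * b) ∈ mseqIdeal k H c
            refine hact_mul_mem _ h0 _ b (fun ha hb => ?_)
            have hm : hact k H ha (a * hact k H h1 c) ∈ mseqIdeal k H c := by
              refine hact_mul_mem _ ha a _ (fun hx hy => ?_)
              rw [hact_hact']
              exact AddSubgroup.subset_closure ⟨hy * h1, some (hact k H hx a), none, rfl⟩
            exact mseqIdeal_mul_right c (hact k H hb b) _ hm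
  intro p hp
  induction hp using AddSubgroup.closure_induction with
  | mem g hg => exact hGact g hg
  | zero => intro h0; rw [hact_zero']; exact zero_mem _
  | add p q hp hq hp' hq' => intro h0; rw [hact_add']; exact add_mem (hp' h0) (hq' h0)
  | neg p hp hp' => intro h0; rw [hact_neg']; exact neg_mem (hp' h0)

/-! Backward-direction machinery -/

def genProd (I : Set R) (m : ℕ) : Set R :=
  {g | ∃ f : ℕ → R, (∀ i, f i ∈ I) ∧ g = prodSeq f m}

def powJ (I : Set R) (m : ℕ) : AddSubgroup R := AddSubgroup.closure (genProd I m)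

lemma mem_powJ_zero {I : Set R} {x : R} (hx : x ∈ I) : x ∈ powJ I 0 :=
  AddSubgroup.subset_closure ⟨fun _ => x, fun _ => hx, rfl⟩

lemma powJ_mul_right {I : Set R} (hId : IsHIdeal k H I) (m : ℕ) :
    ∀ p ∈ powJ I m, ∀ r : R, p * r ∈ powJ I m := by
  intro p hp
  induction hp using AddSubgroup.closure_induction with
  | mem g hg =>
      intro r
      obtain ⟨f, hf, rfl⟩ := hg
      apply AddSubgroup.subset_closure
      cases m with
      | zero => exact ⟨fun _ => f 0 * r, fun _ => hId.mul_mem_right (hf 0) (Set.mem_univ _), rfl⟩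
      | succ m =>
          refine ⟨fun i => if i ≤ m then f i else f i * r, fun i => ?_, ?_⟩
          · dsimp only; split
            · exact hf i
            · exact hId.mul_mem_right (hf i) (Set.mem_univ _)
          · have e1 : prodSeq (fun i => if i ≤ m then f i else f i * r) m = prodSeq f m :=
              prodSeq_congr (fun i hi => if_pos hi)
            show prodSeq f (m+1) * r
                = prodSeq (fun i => if i ≤ m then f i else f i * r) m
                  * (if m + 1 ≤ m then f (m+1) else f (m+1) * r)
            rw [e1, if_neg (Nat.not_succ_le_self m)]
            show prodSeq f m * f (m+1) * r = _
            rw [mul_assoc]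
  | zero => intro r; rw [zero_mul]; exact zero_mem _
  | add p q hp hq hp' hq' => intro r; rw [add_mul]; exact add_mem (hp' r) (hq' r)
  | neg p hp hp' => intro r; rw [neg_mul]; exact neg_mem (hp' r)

lemma powJ_mul {I : Set R} (m l : ℕ) :
    ∀ p ∈ powJ I m, ∀ q ∈ powJ I l, p * q ∈ powJ I (m + 1 + l) := by
  intro p hp
  induction hp using AddSubgroup.closure_induction with
  | mem g hg =>
      intro q hq
      induction hq using AddSubgroup.closure_induction with
      | mem g' hg' =>
          obtain ⟨f, hf, rfl⟩ := hg
          obtain ⟨f', hf', rfl⟩ := hg'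
          apply AddSubgroup.subset_closure
          refine ⟨fun i => if i ≤ m then f i else f' (i - (m+1)), fun i => ?_, ?_⟩
          · dsimp only; split
            · exact hf i
            · exact hf' _
          · rw [prodSeq_append]
            congr 1
            · exact prodSeq_congr (R := R) (fun i hi => (if_pos hi).symm)
            · refine prodSeq_congr (R := R) (fun i _ => ?_)
              show f' i = if m + 1 + i ≤ m then f (m+1+i) else f' (m + 1 + i - (m+1))
              rw [if_neg (by omega)]
              congr 1
              omega
      | zero => rw [mul_zero]; exact zero_mem _
      | add p q hp hq hp' hq' => rw [mul_add]; exact add_mem hp' hq'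
      | neg p hp hp' => rw [mul_neg]; exact neg_mem hp'
  | zero => intro q hq; rw [zero_mul]; exact zero_mem _
  | add p q hp hq hp' hq' => intro q' hq''; rw [add_mul]; exact add_mem (hp' q' hq'') (hq' q' hq'')
  | neg p hp hp' => intro q hq; rw [neg_mul]; exact neg_mem (hp' q hq)

lemma powJ_hact {I : Set R} (hId : IsHIdeal k H I) (m : ℕ) :
    ∀ p ∈ powJ I m, ∀ h0 : H, hact k H h0 p ∈ powJ I m := by
  induction m with
  | zero =>
      intro p hp
      induction hp using AddSubgroup.closure_induction with
      | mem g hg =>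
          intro h0
          obtain ⟨f, hf, rfl⟩ := hg
          exact mem_powJ_zero (hId.hsmul_mem h0 (hf 0))
      | zero => intro h0; rw [hact_zero']; exact zero_mem _
      | add p q hp hq hp' hq' => intro h0; rw [hact_add']; exact add_mem (hp' h0) (hq' h0)
      | neg p hp hp' => intro h0; rw [hact_neg']; exact neg_mem (hp' h0)
  | succ m ih =>
      intro p hp
      induction hp using AddSubgroup.closure_induction with
      | mem g hg =>
          intro h0
          obtain ⟨f, hf, rfl⟩ := hg
          show hact k H h0 (prodSeq f (m+1)) ∈ powJ I (m+1)
          have e : prodSeq f (m+1) = prodSeq f m * f (m+1) := rfl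
          rw [e]
          refine hact_mul_mem _ h0 _ _ (fun h1 h2 => ?_)
          have hp1 : hact k H h1 (prodSeq f m) ∈ powJ I m :=
            ih _ (AddSubgroup.subset_closure ⟨f, hf, rfl⟩) h1
          have hq1 : hact k H h2 (f (m+1)) ∈ powJ I 0 :=
            mem_powJ_zero (hId.hsmul_mem h2 (hf (m+1)))
          exact powJ_mul m 0 _ hp1 _ hq1
      | zero => intro h0; rw [hact_zero']; exact zero_mem _
      | add p q hp hq hp' hq' => intro h0; rw [hact_add']; exact add_mem (hp' h0) (hq' h0)
      | neg p hp hp' => intro h0; rw [hact_neg']; exact neg_mem (hp' h0)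

end AuxMain

/-- `R` is `H`-semiprime iff every non-zero `a` begins an
`H`-`m`-sequence all of whose terms are non-zero. -/
theorem stmt7 {k H R : Type*} [CommRing k] [Ring H] [Algebra k H] [Coalgebra k H]
    [NonUnitalRing R] [Module k R] [SMulCommClass k R R] [IsScalarTower k R R]
    [HModAlg k H R] :
    IsHSemiprime k H (R := R) ↔
      ∀ a : R, a ≠ 0 →
        ∃ (s b : ℕ → R) (h h' : ℕ → H),
          s 0 = a ∧
          (∀ n, s (n + 1) = hact k H (h n) (s n) * b n * hact k H (h' n) (s n)) ∧
          ∀ n, s n ≠ 0 := by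
  constructor
  · intro hsp a ha
    have claim : ∀ c : R, c ≠ 0 →
        ∃ (h0 h0' : H) (b0 : R), hact k H h0 c * b0 * hact k H h0' c ≠ 0 := by
      intro c hc
      by_contra hcon
      push_neg at hcon
      have hid : IsHIdeal k H ((mseqIdeal k H c : AddSubgroup R) : Set R) := by
        refine ⟨Set.subset_univ _, zero_mem _, fun hx hy => add_mem hx hy,
          fun hx => neg_mem hx, ?_, ?_, ?_⟩
        · intro x _ y hy
          exact mseqIdeal_mul_left c x y hy
        · intro x hx y _
          exact mseqIdeal_mul_right c y x hx
        · intro h0 x hx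
          exact mseqIdeal_hact c x hx h0
      have hnil : IsNilpotentSet ((mseqIdeal k H c : AddSubgroup R) : Set R) := by
        refine ⟨2, fun f hf => ?_⟩
        show f 0 * f 1 * f 2 = 0
        exact mseqIdeal_triple hcon (f 0) (hf 0) (f 1) (hf 1) (f 2) (hf 2)
      have hfin := hsp _ hid hnil
      have hcmem : c ∈ ((mseqIdeal k H c : AddSubgroup R) : Set R) :=
        AddSubgroup.subset_closure (mem_mseqGen_self c)
      rw [hfin] at hcmem
      exact hc hcmem
    choose hh hh' bb hne using claim
    let t : ℕ → {r : R // r ≠ 0} := fun n =>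
      Nat.rec ⟨a, ha⟩ (fun _ p =>
        ⟨hact k H (hh p.1 p.2) p.1 * bb p.1 p.2 * hact k H (hh' p.1 p.2) p.1,
          hne p.1 p.2⟩) n
    exact ⟨fun n => (t n).1, fun n => bb (t n).1 (t n).2,
      fun n => hh (t n).1 (t n).2, fun n => hh' (t n).1 (t n).2,
      rfl, fun n => rfl, fun n => (t n).2⟩
  · intro hyp I hId hnil
    ext r
    simp only [Set.mem_singleton_iff]
    constructor
    · intro hr
      by_contra hr0
      obtain ⟨s, b, h, h', hs0, hrec, hneq⟩ := hyp r hr0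
      obtain ⟨n, hn⟩ := hnil
      have hsmem : ∀ j, s j ∈ powJ I (2 ^ j - 1) := by
        intro j
        induction j with
        | zero =>
            have e0 : (2:ℕ) ^ 0 - 1 = 0 := by norm_num
            rw [e0, hs0]
            exact mem_powJ_zero hr
        | succ j ih =>
            rw [hrec j]
            have h1 : hact k H (h j) (s j) ∈ powJ I (2^j - 1) :=
              powJ_hact hId _ _ ih _
            have h2 : hact k H (h j) (s j) * b j ∈ powJ I (2^j - 1) :=
              powJ_mul_right hId _ _ h1 (b j)
            have h3 : hact k H (h' j) (s j) ∈ powJ I (2^j - 1) :=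
              powJ_hact hId _ _ ih _
            have h4 := powJ_mul (I := I) _ _ _ h2 _ h3
            have e : (2^j - 1) + 1 + (2^j - 1) = 2^(j+1) - 1 := by
              have h5 : 1 ≤ 2^j := Nat.one_le_two_pow
              rw [pow_succ]
              omega
            rw [e] at h4
            exact h4
      have hge : n ≤ 2^n - 1 := by
        have := Nat.lt_two_pow_self (n := n)
        omega
      have hzero : ∀ g ∈ genProd I (2^n - 1), g = 0 := by
        rintro g ⟨f, hf, rfl⟩
        rcases eq_or_lt_of_le hge with hEq | hlt
        · rw [← hEq]
          exact hn f hf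
        · have e2 : 2^n - 1 = n + 1 + (2^n - 1 - n - 1) := by omega
          rw [e2, prodSeq_append, hn f hf, zero_mul]
      have hbot : powJ I (2^n - 1) ≤ ⊥ :=
        (AddSubgroup.closure_le ⊥).mpr (fun g hg => by
          simpa using hzero g hg)
      have := hbot (hsmem n)
      rw [AddSubgroup.mem_bot] at this
      exact hneq n this
    · intro h
      rw [h]
      exact hId.zero_mem
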